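/- Let ε > 0, let Y ⊆ ℝ² be uniformly separated with lim_{T→∞} T/G_Y(T) = 0, let Γ = (V,E) be a finite tree with vertex set V = {x₀,…,x_m} ⊆ ℝ². Then for almost every y₀ ∈ Y (in density), there is a map f : V → Y with f(x₀) = y₀ such that for every edge {x_i, x_j} ∈ E there is an integer k_{ij} ≥ 1 with ‖(f(x_i) − f(x_j)) − k_{ij}(x_i − x_j)‖ < ε. -/

import Mathlib

set_option maxHeartbeats 1000000

open Metric Set MeasureTheory Filter Real

noncomputable def setDist {E : Type*} [PseudoMetricSpace E] (A B : Set E) : ℝ :=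
  sInf (Set.image2 dist A B)

def ray {E : Type*} [NormedAddCommGroup E] [NormedSpace ℝ E] (x v : E) : Set E :=
  {p : E | ∃ t : ℝ, 0 ≤ t ∧ p = x + t • v}

local notation "E2" => EuclideanSpace ℝ (Fin 2)


lemma floor_close {c x y : ℝ} (hc : 0 < c) (h : ⌊x/c⌋ = ⌊y/c⌋) : |x - y| < c := by
  have h1 : (⌊y/c⌋ : ℝ) ≤ x/c := h ▸ Int.floor_le (x/c)
  have h2 : x/c < ⌊y/c⌋ + 1 := h ▸ Int.lt_floor_add_one (x/c)
  have h3 : (⌊y/c⌋ : ℝ) ≤ y/c := Int.floor_le (y/c)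
  have h4 : y/c < ⌊y/c⌋ + 1 := Int.lt_floor_add_one (y/c)
  have g1 : (⌊y/c⌋ : ℝ) * c ≤ x := (le_div_iff₀ hc).mp h1
  have g2 : x < ((⌊y/c⌋ : ℝ) + 1) * c := (div_lt_iff₀ hc).mp h2
  have g3 : (⌊y/c⌋ : ℝ) * c ≤ y := (le_div_iff₀ hc).mp h3
  have g4 : y < ((⌊y/c⌋ : ℝ) + 1) * c := (div_lt_iff₀ hc).mp h4
  rw [abs_lt]
  constructor <;> nlinarith

lemma floor_scaled {c x : ℝ} (hc : 0 < c) {j : ℤ} (h : ⌊x/c⌋ = j) :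
    j * c ≤ x ∧ x < j * c + c := by
  have h1 : (j : ℝ) ≤ x/c := h ▸ Int.floor_le (x/c)
  have h2 : x/c < j + 1 := h ▸ Int.lt_floor_add_one (x/c)
  exact ⟨(le_div_iff₀ hc).mp h1, by nlinarith [(div_lt_iff₀ hc).mp h2]⟩

lemma normsq2 (x : E2) : ‖x‖^2 = (x 0)^2 + (x 1)^2 := by
  rw [EuclideanSpace.norm_eq, Real.sq_sqrt (by positivity)]
  simp [Fin.sum_univ_two, sq_abs]

lemma grid_count {Y S : Set E2} {δ : ℝ} (hδ : 0 < δ)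
    (hsep : ∀ y₁ ∈ Y, ∀ y₂ ∈ Y, y₁ ≠ y₂ → δ ≤ dist y₁ y₂)
    (hSY : S ⊆ Y) (p q : E2 → ℝ)
    (hpq : ∀ y z, (dist y z)^2 ≤ (p y - p z)^2 + (q y - q z)^2)
    (a b L₁ L₂ : ℝ)
    (hbox : ∀ y ∈ S, a ≤ p y ∧ p y < a + L₁ ∧ b ≤ q y ∧ q y < b + L₂) :
    S.Finite ∧ S.ncard ≤ (⌊L₁/(δ/2)⌋ + 2).toNat * (⌊L₂/(δ/2)⌋ + 2).toNat := by
  set τ : ℝ := δ/2 with hτdef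
  have hτ : 0 < τ := by positivity
  set Φ : E2 → ℤ × ℤ := fun y => (⌊p y/τ⌋, ⌊q y/τ⌋) with hΦ
  have hinj : S.InjOn Φ := by
    intro y hy z hz he
    by_contra hne
    have hd := hsep y (hSY hy) z (hSY hz) hne
    have h1 : |p y - p z| < τ := floor_close hτ (congrArg Prod.fst he)
    have h2 : |q y - q z| < τ := floor_close hτ (congrArg Prod.snd he)
    have h3 := hpq y z
    have h4 : (dist y z)^2 ≥ δ^2 := by nlinarith [dist_nonneg (x := y) (y := z)]
    nlinarith [abs_nonneg (p y - p z), abs_nonneg (q y - q z), sq_abs (p y - p z),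
      sq_abs (q y - q z)]
  set box : Finset (ℤ × ℤ) :=
    (Finset.Icc ⌊a/τ⌋ ⌊(a+L₁)/τ⌋) ×ˢ (Finset.Icc ⌊b/τ⌋ ⌊(b+L₂)/τ⌋) with hbox'
  have himg : Φ '' S ⊆ ↑box := by
    rintro _ ⟨y, hy, rfl⟩
    obtain ⟨ha1, ha2, hb1, hb2⟩ := hbox y hy
    simp only [hbox', Finset.coe_product, Set.mem_prod, Finset.mem_coe, Finset.mem_Icc, hΦ]
    refine ⟨⟨?_, ?_⟩, ?_, ?_⟩ <;>
      exact Int.floor_le_floor (by gcongr <;> linarith)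
  have hfin : S.Finite := by
    refine Set.Finite.of_finite_image ?_ hinj
    exact (box.finite_toSet).subset himg
  refine ⟨hfin, ?_⟩
  have h1 : S.ncard = (Φ '' S).ncard := (Set.ncard_image_of_injOn hinj).symm
  have h2 : (Φ '' S).ncard ≤ box.card := by
    rw [← Set.ncard_coe_finset]
    exact Set.ncard_le_ncard himg box.finite_toSet
  have h3 : box.card = (⌊(a+L₁)/τ⌋ + 1 - ⌊a/τ⌋).toNat * (⌊(b+L₂)/τ⌋ + 1 - ⌊b/τ⌋).toNat := by
    rw [hbox', Finset.card_product, Int.card_Icc, Int.card_Icc]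
  have key : ∀ u L : ℝ, (⌊(u+L)/τ⌋ + 1 - ⌊u/τ⌋).toNat ≤ (⌊L/τ⌋ + 2).toNat := by
    intro u L
    apply Int.toNat_le_toNat
    have : (u+L)/τ = u/τ + L/τ := by ring
    have h5 : ⌊(u+L)/τ⌋ ≤ ⌊u/τ⌋ + ⌊L/τ⌋ + 1 := by
      have : ⌊(u+L)/τ⌋ < ⌊u/τ⌋ + ⌊L/τ⌋ + 2 := by
        rw [Int.floor_lt]
        push_cast
        rw [this]
        have := Int.lt_floor_add_one (u/τ)
        have := Int.lt_floor_add_one (L/τ)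
        linarith
      omega
    omega
  calc S.ncard = (Φ '' S).ncard := h1
    _ ≤ box.card := h2
    _ = _ := h3
    _ ≤ _ := Nat.mul_le_mul (key a L₁) (key b L₂)

lemma badcount {Y : Set E2} {δ : ℝ} (hδ : 0 < δ)
    (hsep : ∀ y₁ ∈ Y, ∀ y₂ ∈ Y, y₁ ≠ y₂ → δ ≤ dist y₁ y₂)
    (hfin : ∀ T : ℝ, (Y ∩ Metric.ball (0:E2) T).Finite)
    {ε : ℝ} (hε : 0 < ε) {w : E2} (hw : w ≠ 0) {D : Set E2} (hD : D ⊆ Y) :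
    ∃ C : ℝ, 0 ≤ C ∧ ∀ T : ℝ, 0 ≤ T →
      (({y ∈ Y | ¬ ∃ y' ∈ D, ∃ k : ℕ, 1 ≤ k ∧ ‖y' - y - (k:ℝ) • w‖ < ε}
          ∩ Metric.ball 0 T).ncard : ℝ)
        ≤ (((Y \ D) ∩ Metric.ball 0 T).ncard : ℝ) + C * (T+1) := by
  classical
  set lam : ℝ := ‖w‖ with hlam
  have hlam0 : 0 < lam := norm_pos_iff.mpr hw
  set p : E2 → ℝ := fun y => (y 0 * w 0 + y 1 * w 1) / lam with hp
  set q : E2 → ℝ := fun y => (y 1 * w 0 - y 0 * w 1) / lam with hq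
  have hwsq : w 0 ^ 2 + w 1 ^ 2 = lam ^ 2 := (normsq2 w).symm
  have hideq : ∀ y z : E2, (p y - p z)^2 + (q y - q z)^2 = ‖y - z‖^2 := by
    intro y z
    have h0 : (y - z) 0 = y 0 - z 0 := rfl
    have h1 : (y - z) 1 = y 1 - z 1 := rfl
    rw [normsq2, h0, h1, hp, hq]
    field_simp
    linear_combination ((y 0 - z 0)^2 + (y 1 - z 1)^2) * hwsq
  have hpq : ∀ y z : E2, (dist y z)^2 ≤ (p y - p z)^2 + (q y - q z)^2 := by
    intro y z; rw [dist_eq_norm, hideq]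
  -- linearity facts
  have hpsmul : ∀ (y : E2) (c : ℝ), p (y + c • w) = p y + c * lam := by
    intro y c
    have h0 : (y + c • w) 0 = y 0 + c * w 0 := rfl
    have h1 : (y + c • w) 1 = y 1 + c * w 1 := rfl
    rw [hp]; simp only [h0, h1]
    field_simp
    linear_combination c * hwsq
  have hqsmul : ∀ (y : E2) (c : ℝ), q (y + c • w) = q y := by
    intro y c
    have h0 : (y + c • w) 0 = y 0 + c * w 0 := rfl
    have h1 : (y + c • w) 1 = y 1 + c * w 1 := rfl
    rw [hq]; simp only [h0, h1]; ring
  set τ : ℝ := δ/2 with hτ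
  set η : ℝ := min (ε/(2*lam)) (1/3) with hη
  have hη0 : 0 < η := by
    apply lt_min (by positivity) (by norm_num)
  set ρ : ℝ := ε/2 with hρ
  have hρ0 : 0 < ρ := by positivity
  set K₂ : ℕ := (⌊2*lam/τ⌋ + 2).toNat * (⌊ρ/τ⌋ + 2).toNat with hK₂
  set C : ℝ := (K₂ * (⌊1/η⌋+1).toNat : ℝ) * (2/ρ + 2) with hC
  have hC0 : 0 ≤ C := by
    apply mul_nonneg (by positivity)
    positivity
  refine ⟨C, hC0, ?_⟩
  intro T hT
  set Bad : Set E2 := {y ∈ Y | ¬ ∃ y' ∈ D, ∃ k : ℕ, 1 ≤ k ∧ ‖y' - y - (k:ℝ) • w‖ < ε}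
    with hBad
  set A : Set E2 := Bad ∩ D ∩ Metric.ball 0 T with hA
  have hAY : A ⊆ Y := fun y hy => hy.1.1.1
  -- A is finite and small
  have hsy : ∀ y ∈ A, (p y)^2 + (q y)^2 < T^2 := by
    intro y hy
    have hb : ‖y‖ < T := by simpa [mem_ball, dist_eq_norm] using hy.2
    have : (p y - p 0)^2 + (q y - q 0)^2 = ‖y - 0‖^2 := hideq y 0
    have hp0 : p 0 = 0 := by simp [hp]
    have hq0 : q 0 = 0 := by simp [hq]
    simp only [hp0, hq0, sub_zero] at this
    rw [this]
    nlinarith [norm_nonneg y]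
  set sc : E2 → ℝ := fun y => p y / lam with hsc
  have hps : ∀ y, p y = sc y * lam := by
    intro y; rw [hsc]; field_simp
  set ψ : E2 → ℤ × ℤ := fun y => (⌊q y/ρ⌋, ⌊Int.fract (sc y)/η⌋) with hψ
  have claim2 : ∀ y ∈ A, ∀ z ∈ A, ψ y = ψ z → ¬ (1 ≤ sc z - sc y) := by
    intro y hy z hz he hge
    have hfr : |Int.fract (sc z) - Int.fract (sc y)| < η := by
      have : ⌊Int.fract (sc z)/η⌋ = ⌊Int.fract (sc y)/η⌋ := (congrArg Prod.snd he).symm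
      exact floor_close hη0 this
    set k : ℤ := ⌊sc z⌋ - ⌊sc y⌋ with hkdef
    have hk : |sc z - sc y - k| < η := by
      have e1 : sc z - sc y - (k:ℝ) = Int.fract (sc z) - Int.fract (sc y) := by
        rw [hkdef, Int.fract, Int.fract]; push_cast; ring
      rw [e1]; exact hfr
    have hη3 : η ≤ 1/3 := min_le_right _ _
    have hk1 : 1 ≤ k := by
      have h2 := abs_lt.mp hk
      have h3 : (0:ℝ) < (k:ℝ) := by linarith
      have h4 : 0 < k := by exact_mod_cast h3
      omega
    have hknZ : (k.toNat : ℤ) = k := Int.toNat_of_nonneg (by omega)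
    set kn : ℕ := k.toNat with hkn'
    have hkn : (kn : ℝ) = (k:ℝ) := by exact_mod_cast congrArg (fun n : ℤ => (n:ℝ)) hknZ
    have hknn : 1 ≤ kn := by omega
    have hqd : |q z - q y| < ρ := by
      have : ⌊q z/ρ⌋ = ⌊q y/ρ⌋ := (congrArg Prod.fst he).symm
      exact floor_close hρ0 this
    have hnrm : ‖z - y - (kn:ℝ) • w‖^2
        = (p z - p y - (kn:ℝ)*lam)^2 + (q z - q y)^2 := by
      have e2 : z - y - (kn:ℝ) • w = z - (y + (kn:ℝ) • w) := by abel
      rw [e2, ← hideq z (y + (kn:ℝ) • w), hpsmul, hqsmul]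
      ring
    have hpd : |p z - p y - (kn:ℝ)*lam| ≤ ε/2 := by
      have e3 : p z - p y - (kn:ℝ)*lam = (sc z - sc y - (k:ℝ)) * lam := by
        rw [hps z, hps y, hkn]; ring
      rw [e3, abs_mul, abs_of_pos hlam0]
      have hηε : η ≤ ε/(2*lam) := min_le_left _ _
      have h9 : ε/(2*lam)*lam = ε/2 := by field_simp
      nlinarith [hk.le, abs_nonneg (sc z - sc y - (k:ℝ))]
    have hlt : ‖z - y - (kn:ℝ) • w‖ < ε := by
      have hsq : ‖z - y - (kn:ℝ) • w‖^2 < ε^2 := by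
        rw [hnrm]
        nlinarith [abs_nonneg (p z - p y - (kn:ℝ)*lam), sq_abs (p z - p y - (kn:ℝ)*lam),
          sq_abs (q z - q y), abs_nonneg (q z - q y)]
      exact lt_of_pow_lt_pow_left₀ 2 hε.le hsq
    exact hy.1.1.2 ⟨z, hz.1.2, kn, hknn, hlt⟩
  have hpair : ∀ y ∈ A, ∀ z ∈ A, ψ y = ψ z → |sc y - sc z| < 1 := by
    intro y hy z hz he
    by_contra hcon
    push_neg at hcon
    rcases le_abs.mp hcon with h | h
    · exact claim2 z hz y hy he.symm (by linarith)
    · exact claim2 y hy z hz he (by linarith)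
  have hAfin : A.Finite := (hfin T).subset (fun y hy => ⟨hAY hy, hy.2⟩)
  set F : Finset E2 := hAfin.toFinset with hF
  have hFA : (F : Set E2) = A := hAfin.coe_toFinset
  have hfiber : ∀ c ∈ F.image ψ, (F.filter (fun x => ψ x = c)).card ≤ K₂ := by
    intro c hc
    obtain ⟨y₀, hy₀F, hy₀c⟩ := Finset.mem_image.mp hc
    have hy₀A : y₀ ∈ A := by rw [← hFA]; exact_mod_cast hy₀F
    set S' : Set E2 := ↑(F.filter fun x => ψ x = c) with hS'
    have hmem : ∀ x ∈ S', x ∈ A ∧ ψ x = c := by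
      intro x hx
      simp only [hS', Finset.coe_filter, Set.mem_setOf_eq, hAfin.mem_toFinset] at hx
      exact ⟨hAfin.mem_toFinset.mp hx.1, hx.2⟩
    have hbox' : ∀ x ∈ S', (p y₀ - lam) ≤ p x ∧ p x < (p y₀ - lam) + 2*lam ∧
        ((c.1:ℝ) * ρ) ≤ q x ∧ q x < ((c.1:ℝ) * ρ) + ρ := by
      intro x hx
      obtain ⟨hxA, hxc⟩ := hmem x hx
      have h1 : |sc x - sc y₀| < 1 := hpair x hxA y₀ hy₀A (by rw [hxc, hy₀c])
      have h2 := abs_lt.mp h1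
      have hpb : |p x - p y₀| < lam := by
        rw [hps x, hps y₀, ← sub_mul, abs_mul, abs_of_pos hlam0]
        nlinarith
      have h3 := abs_lt.mp hpb
      have hqx : ⌊q x/ρ⌋ = c.1 := congrArg Prod.fst hxc
      obtain ⟨h4, h5⟩ := floor_scaled hρ0 hqx
      exact ⟨by linarith, by linarith, h4, h5⟩
    have := grid_count hδ hsep (fun x hx => hAY (hmem x hx).1) p q hpq
      (p y₀ - lam) ((c.1:ℝ) * ρ) (2*lam) ρ hbox'
    have hcc : (F.filter (fun x => ψ x = c)).card = S'.ncard := by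
      rw [hS', Set.ncard_coe_finset]
    rw [hcc, hK₂]
    exact this.2
  have hmain : F.card ≤ K₂ * (F.image ψ).card :=
    Finset.card_le_mul_card_image F K₂ hfiber
  have himg : F.image ψ ⊆ (Finset.Icc ⌊-T/ρ⌋ ⌊T/ρ⌋) ×ˢ (Finset.Icc 0 ⌊1/η⌋) := by
    intro c hc
    obtain ⟨y, hyF, rfl⟩ := Finset.mem_image.mp hc
    have hyA : y ∈ A := by rw [← hFA]; exact_mod_cast hyF
    have hqy := hsy y hyA
    have hq1 : -T < q y := by nlinarith [sq_nonneg (p y), sq_nonneg (q y + T)]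
    have hq2 : q y < T := by nlinarith [sq_nonneg (p y), sq_nonneg (q y - T)]
    rw [Finset.mem_product]
    constructor
    · rw [Finset.mem_Icc]
      constructor
      · exact Int.floor_le_floor (by gcongr)
      · exact Int.floor_le_floor (by gcongr)
    · rw [Finset.mem_Icc]
      constructor
      · exact Int.floor_nonneg.mpr (div_nonneg (Int.fract_nonneg _) hη0.le)
      · refine Int.floor_le_floor ?_
        gcongr
        exact (Int.fract_lt_one _).le
  have himgcard : (F.image ψ).card ≤ (⌊T/ρ⌋ + 1 - ⌊-T/ρ⌋).toNat * (⌊1/η⌋ + 1).toNat := by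
    calc (F.image ψ).card ≤ _ := Finset.card_le_card himg
      _ = _ := by rw [Finset.card_product, Int.card_Icc, Int.card_Icc]; norm_num
  have hXbound : ((⌊T/ρ⌋ + 1 - ⌊-T/ρ⌋).toNat : ℝ) ≤ (2/ρ + 2) * (T+1) := by
    rcases le_or_gt (⌊T/ρ⌋ + 1 - ⌊-T/ρ⌋) 0 with h | h
    · rw [Int.toNat_of_nonpos h]
      norm_num
      positivity
    · have he5 := Int.toNat_of_nonneg h.le
      rw [show ((⌊T/ρ⌋ + 1 - ⌊-T/ρ⌋).toNat : ℝ) = ((⌊T/ρ⌋ + 1 - ⌊-T/ρ⌋ : ℤ) : ℝ) by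
        exact_mod_cast congrArg (fun z : ℤ => (z:ℝ)) he5]
      push_cast
      have g1 : (⌊T/ρ⌋ : ℝ) ≤ T/ρ := Int.floor_le _
      have g2 : -T/ρ - 1 < (⌊-T/ρ⌋ : ℝ) := Int.sub_one_lt_floor _
      have g3 : (0:ℝ) < 2/ρ := by positivity
      have g4 : -T/ρ = -(T/ρ) := by ring
      have g5 : 2/ρ * T = 2*(T/ρ) := by ring
      nlinarith [div_nonneg hT hρ0.le]
  have hAbound : ((A.ncard : ℕ) : ℝ) ≤ C * (T+1) := by
    have e4 : A.ncard = F.card := by rw [← hFA, Set.ncard_coe_finset]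
    rw [e4]
    have h7 : F.card ≤ K₂ * ((⌊T/ρ⌋ + 1 - ⌊-T/ρ⌋).toNat * (⌊1/η⌋ + 1).toNat) :=
      le_trans hmain (Nat.mul_le_mul_left K₂ himgcard)
    have h6 : (F.card : ℝ) ≤ (K₂ : ℝ) *
        (((⌊T/ρ⌋ + 1 - ⌊-T/ρ⌋).toNat : ℝ) * ((⌊1/η⌋ + 1).toNat : ℝ)) := by
      exact_mod_cast h7
    rw [hC]
    calc (F.card : ℝ) ≤ _ := h6
      _ ≤ (K₂ : ℝ) * (((2/ρ + 2) * (T+1)) * ((⌊1/η⌋ + 1).toNat : ℝ)) := by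
          apply mul_le_mul_of_nonneg_left _ (by positivity)
          exact mul_le_mul_of_nonneg_right hXbound (by positivity)
      _ = (K₂ * ((⌊1/η⌋+1).toNat:ℝ)) * (2/ρ + 2) * (T+1) := by ring
  -- final assembly
  have hsplit : Bad ∩ Metric.ball 0 T ⊆ ((Y \ D) ∩ Metric.ball 0 T) ∪ A := by
    intro y hy
    by_cases hyD : y ∈ D
    · exact Or.inr ⟨⟨hy.1, hyD⟩, hy.2⟩
    · exact Or.inl ⟨⟨hy.1.1, hyD⟩, hy.2⟩
  have hfin1 : (((Y \ D) ∩ Metric.ball (0:E2) T) ∪ A).Finite := by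
    apply ((hfin T).subset _).union hAfin
    exact fun y hy => ⟨hy.1.1, hy.2⟩
  have h8 : (Bad ∩ Metric.ball 0 T).ncard ≤ ((Y \ D) ∩ Metric.ball (0:E2) T).ncard + A.ncard := by
    calc (Bad ∩ Metric.ball 0 T).ncard ≤ (((Y \ D) ∩ Metric.ball (0:E2) T) ∪ A).ncard :=
          Set.ncard_le_ncard hsplit hfin1
      _ ≤ _ := Set.ncard_union_le _ _
  calc ((Bad ∩ Metric.ball 0 T).ncard : ℝ) ≤
        (((Y \ D) ∩ Metric.ball (0:E2) T).ncard : ℝ) + (A.ncard : ℝ) := by exact_mod_cast h8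
    _ ≤ _ := by have := hAbound; linarith

section TreeLemmas

variable {α : Type*} {G : SimpleGraph α}

lemma tree_path_length (hG : G.IsTree) {u v : α} (p : G.Walk u v) (hp : p.IsPath) :
    p.length = G.dist u v := by
  obtain ⟨q, hq, hql⟩ := hG.isConnected.exists_path_of_dist u v
  rw [(hG.existsUnique_path u v).unique hp hq, hql]

lemma tree_parent_exists (hG : G.IsTree) {r v : α} {n : ℕ} (h : G.dist r v = n + 1) :
    ∃ u, G.Adj u v ∧ G.dist r u = n := by
  obtain ⟨p, hpl⟩ := hG.isConnected.exists_walk_length_eq_dist r v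
  have hnn : ¬ p.reverse.Nil := by
    rw [SimpleGraph.Walk.not_nil_iff_lt_length, SimpleGraph.Walk.length_reverse, hpl, h]
    omega
  obtain ⟨u, hadj, q', hq'⟩ := SimpleGraph.Walk.not_nil_iff.mp hnn
  have hql : q'.length = n := by
    have := congrArg SimpleGraph.Walk.length hq'
    rw [SimpleGraph.Walk.length_reverse, hpl, h, SimpleGraph.Walk.length_cons] at this
    omega
  have h1 : G.dist r u ≤ n := by
    have := SimpleGraph.dist_le q'.reverse
    rwa [SimpleGraph.Walk.length_reverse, hql] at this
  have h2 : n ≤ G.dist r u := by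
    have h3 := hG.isConnected.dist_triangle (u := r) (v := u) (w := v)
    have h4 : G.dist u v = 1 := SimpleGraph.dist_eq_one_iff_adj.mpr hadj.symm
    omega
  exact ⟨u, hadj.symm, le_antisymm h1 h2⟩

lemma walk_mem_dist_le {r x v : α} (p : G.Walk r x) (h : v ∈ p.support) [DecidableEq α] :
    G.dist r v ≤ p.length := by
  have := SimpleGraph.dist_le (p.takeUntil v h)
  have := SimpleGraph.Walk.length_takeUntil_le p h
  omega

lemma tree_level_step [DecidableEq α] (hG : G.IsTree) {r a b : α} (h : G.Adj a b) :
    G.dist r b = G.dist r a + 1 ∨ G.dist r a = G.dist r b + 1 := by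
  have h1 : G.dist r b ≤ G.dist r a + 1 := by
    have := hG.isConnected.dist_triangle (u := r) (v := a) (w := b)
    have := SimpleGraph.dist_eq_one_iff_adj.mpr h
    omega
  have h2 : G.dist r a ≤ G.dist r b + 1 := by
    have := hG.isConnected.dist_triangle (u := r) (v := b) (w := a)
    have := SimpleGraph.dist_eq_one_iff_adj.mpr h.symm
    omega
  have hne : G.dist r a ≠ G.dist r b := by
    intro heq
    obtain ⟨pa, hpa, hpal⟩ := hG.isConnected.exists_path_of_dist r a
    have hbs : b ∉ pa.support := by
      intro hmem
      have ht := SimpleGraph.dist_le (pa.takeUntil b hmem)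
      have hd := SimpleGraph.dist_le (pa.dropUntil b hmem)
      have hsum : (pa.takeUntil b hmem).length + (pa.dropUntil b hmem).length = pa.length := by
        rw [← SimpleGraph.Walk.length_append, SimpleGraph.Walk.take_spec]
      have hba : 1 ≤ G.dist b a := hG.isConnected.pos_dist_of_ne h.ne'
      omega
    have hcp : (pa.concat h).IsPath := by
      rw [← SimpleGraph.Walk.reverse_reverse (pa.concat h)]
      apply SimpleGraph.Walk.IsPath.reverse
      rw [SimpleGraph.Walk.reverse_concat]
      exact hpa.reverse.cons (by rwa [SimpleGraph.Walk.support_reverse, List.mem_reverse])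
    have := tree_path_length hG _ hcp
    rw [SimpleGraph.Walk.length_concat, hpal, heq] at this
    omega
  omega

lemma tree_parent_unique [DecidableEq α] (hG : G.IsTree) {r a u b : α} {n : ℕ}
    (hab : G.Adj a b) (hub : G.Adj u b) (ha : G.dist r a = n) (hu : G.dist r u = n)
    (hb : G.dist r b = n + 1) : a = u := by
  obtain ⟨pa, hpa, hpal⟩ := hG.isConnected.exists_path_of_dist r a
  obtain ⟨pu, hpu, hpul⟩ := hG.isConnected.exists_path_of_dist r u
  have hbsa : b ∉ pa.support := by
    intro hmem
    have := walk_mem_dist_le pa hmem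
    omega
  have hbsu : b ∉ pu.support := by
    intro hmem
    have := walk_mem_dist_le pu hmem
    omega
  have hcpa : (pa.concat hab).IsPath := by
    rw [← SimpleGraph.Walk.reverse_reverse (pa.concat hab)]
    apply SimpleGraph.Walk.IsPath.reverse
    rw [SimpleGraph.Walk.reverse_concat]
    exact hpa.reverse.cons (by rwa [SimpleGraph.Walk.support_reverse, List.mem_reverse])
  have hcpu : (pu.concat hub).IsPath := by
    rw [← SimpleGraph.Walk.reverse_reverse (pu.concat hub)]
    apply SimpleGraph.Walk.IsPath.reverse
    rw [SimpleGraph.Walk.reverse_concat]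
    exact hpu.reverse.cons (by rwa [SimpleGraph.Walk.support_reverse, List.mem_reverse])
  have heq : pa.concat hab = pu.concat hub := (hG.existsUnique_path r b).unique hcpa hcpu
  have := congrArg (fun w : G.Walk r b => w.reverse.getVert 1) heq
  simpa [SimpleGraph.Walk.reverse_concat, SimpleGraph.Walk.getVert_cons_succ] using this

end TreeLemmas

def gdaux (ε : ℝ) (Y : Set E2) {V : Finset E2} (G : SimpleGraph V) (r : V) :
    ℕ → V → Set E2
  | 0, _ => Y
  | (n+1), v => {y ∈ Y | ∀ c : V, G.Adj v c → G.dist r c = G.dist r v + 1 →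
      ∃ y' ∈ gdaux ε Y G r n c, ∃ k : ℕ, 1 ≤ k ∧
        ‖y' - y - (k:ℝ) • ((c:E2) - (v:E2))‖ < ε}

lemma gdaux_subset (ε : ℝ) (Y : Set E2) {V : Finset E2} (G : SimpleGraph V) (r : V)
    (n : ℕ) (v : V) : gdaux ε Y G r n v ⊆ Y := by
  cases n with
  | zero => exact fun y hy => hy
  | succ n => exact fun y hy => hy.1

noncomputable def goodset (ε : ℝ) (Y : Set E2) {V : Finset E2} (G : SimpleGraph V) (r : V)
    (v : V) : Set E2 :=
  gdaux ε Y G r ((Finset.univ.sup fun u : V => G.dist r u) + 1 - G.dist r v) v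

lemma goodset_eq (ε : ℝ) (Y : Set E2) {V : Finset E2} (G : SimpleGraph V) (r : V) (v : V) :
    goodset ε Y G r v = {y ∈ Y | ∀ c : V, G.Adj v c → G.dist r c = G.dist r v + 1 →
      ∃ y' ∈ goodset ε Y G r c, ∃ k : ℕ, 1 ≤ k ∧
        ‖y' - y - (k:ℝ) • ((c:E2) - (v:E2))‖ < ε} := by
  set L := Finset.univ.sup fun u : V => G.dist r u with hL
  have hvL : G.dist r v ≤ L := Finset.le_sup (Finset.mem_univ v)
  have h1 : L + 1 - G.dist r v = (L - G.dist r v) + 1 := by omega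
  rw [goodset, h1]
  show gdaux ε Y G r ((L - G.dist r v) + 1) v = _
  rw [gdaux]
  ext y
  simp only [Set.mem_setOf_eq]
  constructor
  · rintro ⟨hy, h⟩
    refine ⟨hy, fun c hc hlc => ?_⟩
    have hcL : G.dist r c ≤ L := Finset.le_sup (Finset.mem_univ c)
    have hidx : L - G.dist r v = L + 1 - G.dist r c := by omega
    rw [goodset, ← hidx]
    exact h c hc hlc
  · rintro ⟨hy, h⟩
    refine ⟨hy, fun c hc hlc => ?_⟩
    have hcL : G.dist r c ≤ L := Finset.le_sup (Finset.mem_univ c)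
    have hidx : L - G.dist r v = L + 1 - G.dist r c := by omega
    rw [hidx]
    exact h c hc hlc

lemma goodset_subset (ε : ℝ) (Y : Set E2) {V : Finset E2} (G : SimpleGraph V) (r : V)
    (v : V) : goodset ε Y G r v ⊆ Y := gdaux_subset _ _ _ _ _ _

lemma ncard_biUnion_le {α ι : Type*} (s : Finset ι) (f : ι → Set α)
    (hf : ∀ i, (f i).Finite) : (⋃ i ∈ s, f i).ncard ≤ ∑ i ∈ s, (f i).ncard := by
  classical
  induction s using Finset.induction with
  | empty => simp
  | insert _ _ hx ih =>
    rename_i a s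
    rw [Finset.sum_insert hx]
    have hsub : (⋃ i ∈ insert a s, f i) ⊆ f a ∪ ⋃ i ∈ s, f i := by
      intro y hy
      simp only [Set.mem_iUnion, Finset.mem_insert, exists_prop] at hy
      obtain ⟨i, hi | hi, hyi⟩ := hy
      · exact Or.inl (hi ▸ hyi)
      · exact Or.inr (by simp only [Set.mem_iUnion, exists_prop]; exact ⟨i, hi, hyi⟩)
    have hfin2 : (f a ∪ ⋃ i ∈ s, f i).Finite :=
      (hf a).union (Set.Finite.biUnion s.finite_toSet fun i _ => hf i)
    calc (⋃ i ∈ insert a s, f i).ncard ≤ (f a ∪ ⋃ i ∈ s, f i).ncard :=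
          Set.ncard_le_ncard hsub hfin2
      _ ≤ (f a).ncard + (⋃ i ∈ s, f i).ncard := Set.ncard_union_le _ _
      _ ≤ (f a).ncard + ∑ i ∈ s, (f i).ncard := add_le_add_right ih _

theorem stmt14 (ε : ℝ) (hε : 0 < ε) (Y : Set (EuclideanSpace ℝ (Fin 2)))
    (hsep : ∃ δ > (0 : ℝ), ∀ y₁ ∈ Y, ∀ y₂ ∈ Y, y₁ ≠ y₂ → δ ≤ dist y₁ y₂)
    (hgrow : Tendsto (fun T : ℝ =>
        T / ((Y ∩ Metric.ball (0 : EuclideanSpace ℝ (Fin 2)) T).ncard : ℝ)) atTop (nhds 0))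
    (V : Finset (EuclideanSpace ℝ (Fin 2))) (G : SimpleGraph V) (hG : G.IsTree)
    (x₀ : EuclideanSpace ℝ (Fin 2)) (hx₀ : x₀ ∈ V) :
    Tendsto (fun r : ℝ =>
        (({y₀ ∈ Y | ¬ ∃ f : V → EuclideanSpace ℝ (Fin 2), (∀ a : V, f a ∈ Y) ∧
              f ⟨x₀, hx₀⟩ = y₀ ∧
              ∀ a b : V, G.Adj a b → ∃ k : ℕ, 1 ≤ k ∧
                ‖(f a - f b) - (k : ℝ) • ((a : EuclideanSpace ℝ (Fin 2)) - (b : EuclideanSpace ℝ (Fin 2)))‖ < ε} ∩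
            Metric.ball (0 : EuclideanSpace ℝ (Fin 2)) r).ncard : ℝ) /
          ((Y ∩ Metric.ball (0 : EuclideanSpace ℝ (Fin 2)) r).ncard : ℝ))
      atTop (nhds 0) := by
  classical
  obtain ⟨δ, hδ, hsep⟩ := hsep
  have hfin : ∀ T : ℝ, (Y ∩ Metric.ball (0:E2) T).Finite := by
    intro T
    rcases le_or_gt T 0 with hT | hT
    · rw [Metric.ball_eq_empty.mpr hT, Set.inter_empty]
      exact Set.finite_empty
    · refine (grid_count hδ hsep (S := Y ∩ Metric.ball 0 T) Set.inter_subset_left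
        (fun y => y 0) (fun y => y 1) ?_ (-T) (-T) (2*T) (2*T) ?_).1
      · intro y z
        rw [dist_eq_norm, normsq2]
        have h0 : (y - z) 0 = y 0 - z 0 := rfl
        have h1 : (y - z) 1 = y 1 - z 1 := rfl
        rw [h0, h1]
      · intro y hy
        have hb : ‖y‖ < T := by simpa [mem_ball, dist_eq_norm] using hy.2
        have hn := normsq2 y
        have h0 : (y 0)^2 < T^2 := by nlinarith [sq_nonneg (y 1), norm_nonneg y]
        have h1 : (y 1)^2 < T^2 := by nlinarith [sq_nonneg (y 0), norm_nonneg y]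
        have h0a : -T < y 0 := by nlinarith [sq_nonneg (y 0 + T)]
        have h0b : y 0 < T := by nlinarith [sq_nonneg (y 0 - T)]
        have h1a : -T < y 1 := by nlinarith [sq_nonneg (y 1 + T)]
        have h1b : y 1 < T := by nlinarith [sq_nonneg (y 1 - T)]
        exact ⟨h0a.le, by linarith, h1a.le, by linarith⟩
  set root : V := ⟨x₀, hx₀⟩ with hroot
  set L : ℕ := Finset.univ.sup (fun u : V => G.dist root u) with hLdef
  have hsupL : ∀ v : V, G.dist root v ≤ L := fun v => Finset.le_sup (Finset.mem_univ v)
  -- density estimate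
  have density : ∀ m : ℕ, ∀ v : V, L - G.dist root v < m → ∃ C : ℝ, 0 ≤ C ∧ ∀ T : ℝ, 0 ≤ T →
      (((Y \ goodset ε Y G root v) ∩ Metric.ball 0 T).ncard : ℝ) ≤ C * (T+1) := by
    intro m
    induction m with
    | zero => intro v hv; omega
    | succ m ih =>
      intro v _
      set Sc : V → Set E2 := fun c => {y ∈ Y | G.Adj v c ∧ G.dist root c = G.dist root v + 1 ∧
        ¬ ∃ y' ∈ goodset ε Y G root c, ∃ k : ℕ, 1 ≤ k ∧
          ‖y' - y - (k:ℝ) • ((c:E2) - (v:E2))‖ < ε} with hSc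
      have hScY : ∀ c, Sc c ⊆ Y := fun c y hy => hy.1
      have hc : ∀ c : V, ∃ C : ℝ, 0 ≤ C ∧ ∀ T : ℝ, 0 ≤ T →
          ((Sc c ∩ Metric.ball 0 T).ncard : ℝ) ≤ C * (T+1) := by
        intro c
        by_cases hchild : G.Adj v c ∧ G.dist root c = G.dist root v + 1
        · have hcL : G.dist root c ≤ L := hsupL c
          have hihc : L - G.dist root c < m := by omega
          obtain ⟨C1, hC10, hC1⟩ := ih c hihc
          have hwne : ((c:E2) - (v:E2)) ≠ 0 := by
            rw [sub_ne_zero]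
            exact fun hh => (G.ne_of_adj hchild.1) (Subtype.coe_injective hh).symm
          obtain ⟨C2, hC20, hC2⟩ :=
            badcount hδ hsep hfin hε hwne (goodset_subset ε Y G root c)
          refine ⟨C1 + C2, by linarith, ?_⟩
          intro T hT
          have hsub : Sc c ∩ Metric.ball 0 T ⊆
              {y ∈ Y | ¬ ∃ y' ∈ goodset ε Y G root c, ∃ k : ℕ, 1 ≤ k ∧
                ‖y' - y - (k:ℝ) • ((c:E2) - (v:E2))‖ < ε} ∩ Metric.ball 0 T :=
            fun y hy => ⟨⟨hy.1.1, hy.1.2.2.2⟩, hy.2⟩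
          have hfi : ({y ∈ Y | ¬ ∃ y' ∈ goodset ε Y G root c, ∃ k : ℕ, 1 ≤ k ∧
              ‖y' - y - (k:ℝ) • ((c:E2) - (v:E2))‖ < ε} ∩ Metric.ball 0 T).Finite :=
            (hfin T).subset (fun y hy => ⟨hy.1.1, hy.2⟩)
          have h2 : ((Sc c ∩ Metric.ball 0 T).ncard : ℝ) ≤
              (({y ∈ Y | ¬ ∃ y' ∈ goodset ε Y G root c, ∃ k : ℕ, 1 ≤ k ∧
                ‖y' - y - (k:ℝ) • ((c:E2) - (v:E2))‖ < ε} ∩ Metric.ball 0 T).ncard : ℝ) := by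
            exact_mod_cast Set.ncard_le_ncard hsub hfi
          have h3 := hC2 T hT
          have h4 := hC1 T hT
          linarith
        · refine ⟨0, le_refl 0, ?_⟩
          intro T hT
          have hempty : Sc c ∩ Metric.ball 0 T = ∅ := by
            ext y
            simp only [Set.mem_inter_iff, Set.mem_empty_iff_false, iff_false, not_and, hSc,
              Set.mem_setOf_eq]
            intro hy
            exact absurd ⟨hy.2.1, hy.2.2.1⟩ hchild
          rw [hempty, Set.ncard_empty]
          norm_num
      choose CC hCC0 hCC using hc
      refine ⟨∑ c : V, CC c, Finset.sum_nonneg (fun c _ => hCC0 c), ?_⟩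
      intro T hT
      have hsub : (Y \ goodset ε Y G root v) ∩ Metric.ball 0 T ⊆
          ⋃ c ∈ (Finset.univ : Finset V), (Sc c ∩ Metric.ball 0 T) := by
        intro y hy
        have hyY : y ∈ Y := hy.1.1
        have hyb := hy.2
        have hyng : y ∉ goodset ε Y G root v := hy.1.2
        rw [goodset_eq] at hyng
        simp only [Set.mem_setOf_eq, not_and, not_forall] at hyng
        obtain ⟨c, hadj, hlev, hno⟩ := hyng hyY
        simp only [Set.mem_iUnion]
        exact ⟨c, Finset.mem_univ c, ⟨⟨hyY, hadj, hlev, hno⟩, hyb⟩⟩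
      have hfinc : ∀ c : V, (Sc c ∩ Metric.ball (0:E2) T).Finite :=
        fun c => (hfin T).subset (fun y hy => ⟨hScY c hy.1, hy.2⟩)
      have h1 : ((Y \ goodset ε Y G root v) ∩ Metric.ball 0 T).ncard ≤
          ∑ c : V, (Sc c ∩ Metric.ball 0 T).ncard := by
        refine le_trans (Set.ncard_le_ncard hsub ?_) (ncard_biUnion_le _ _ hfinc)
        exact Set.Finite.biUnion (Finset.univ : Finset V).finite_toSet
          (fun c _ => hfinc c)
      calc (((Y \ goodset ε Y G root v) ∩ Metric.ball 0 T).ncard : ℝ)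
          ≤ (∑ c : V, (Sc c ∩ Metric.ball 0 T).ncard : ℕ) := by exact_mod_cast h1
        _ = ∑ c : V, ((Sc c ∩ Metric.ball 0 T).ncard : ℝ) := by push_cast; rfl
        _ ≤ ∑ c : V, CC c * (T+1) := Finset.sum_le_sum (fun c _ => hCC c T hT)
        _ = (∑ c : V, CC c) * (T+1) := by rw [Finset.sum_mul]
  -- construction
  have build : ∀ y₀ ∈ goodset ε Y G root root, ∀ n : ℕ, ∃ f : V → E2,
      f root = y₀ ∧ (∀ v : V, f v ∈ Y) ∧
      (∀ v : V, G.dist root v ≤ n → f v ∈ goodset ε Y G root v) ∧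
      (∀ a b : V, G.Adj a b → G.dist root a ≤ n → G.dist root b ≤ n →
        ∃ k : ℕ, 1 ≤ k ∧ ‖(f a - f b) - (k:ℝ) • ((a:E2) - (b:E2))‖ < ε) := by
    intro y₀ hy₀ n
    have hy₀Y : y₀ ∈ Y := goodset_subset ε Y G root root hy₀
    induction n with
    | zero =>
      refine ⟨fun _ => y₀, rfl, fun _ => hy₀Y, ?_, ?_⟩
      · intro v hv
        have hvr : root = v := (hG.isConnected.dist_eq_zero_iff).mp (Nat.le_zero.mp hv)
        rw [← hvr]
        exact hy₀
      · intro a b hab ha hb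
        have ha' : root = a := (hG.isConnected.dist_eq_zero_iff).mp (Nat.le_zero.mp ha)
        have hb' : root = b := (hG.isConnected.dist_eq_zero_iff).mp (Nat.le_zero.mp hb)
        rw [← ha', ← hb'] at hab
        exact absurd hab (G.irrefl)
    | succ n ihn =>
      obtain ⟨f, hf1, hf2, hf3, hf4⟩ := ihn
      have hch : ∀ v : V, ∃ y' : E2,
          (G.dist root v = n + 1 → y' ∈ goodset ε Y G root v ∧ ∃ u : V, G.Adj u v ∧
            G.dist root u = n ∧ ∃ k : ℕ, 1 ≤ k ∧
              ‖y' - f u - (k:ℝ) • ((v:E2) - (u:E2))‖ < ε) ∧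
          (G.dist root v ≠ n + 1 → y' = f v) := by
        intro v
        by_cases hv : G.dist root v = n + 1
        · obtain ⟨u, hadj, hu⟩ := tree_parent_exists hG hv
          have hfu : f u ∈ goodset ε Y G root u := hf3 u (le_of_eq hu)
          rw [goodset_eq] at hfu
          obtain ⟨y', hy'g, k, hk, hnorm⟩ := hfu.2 v hadj (by omega)
          exact ⟨y', fun _ => ⟨hy'g, u, hadj, hu, k, hk, hnorm⟩, fun h => absurd hv h⟩
        · exact ⟨f v, fun h => absurd h hv, fun _ => rfl⟩
      choose f' hf'1 hf'2 using hch
      have hroot0 : G.dist root root = 0 := by simp [SimpleGraph.dist_self]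
      have key : ∀ a b : V, G.Adj a b → G.dist root b = G.dist root a + 1 →
          G.dist root b ≤ n + 1 → ∃ k : ℕ, 1 ≤ k ∧
            ‖(f' a - f' b) - (k:ℝ) • ((a:E2) - (b:E2))‖ < ε := by
        intro a b hab hlev hb
        rcases Nat.lt_or_ge (G.dist root b) (n+1) with hbn | hbn
        · have hbne : G.dist root b ≠ n + 1 := by omega
          have hane : G.dist root a ≠ n + 1 := by omega
          rw [hf'2 a hane, hf'2 b hbne]
          exact hf4 a b hab (by omega) (by omega)
        · have hbeq : G.dist root b = n + 1 := by omega
          have haeq : G.dist root a = n := by omega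
          obtain ⟨_, u, hadju, hu, k, hk, hnorm⟩ := hf'1 b hbeq
          have hau : a = u := tree_parent_unique hG hab hadju haeq hu hbeq
          subst hau
          have hane : G.dist root a ≠ n + 1 := by omega
          refine ⟨k, hk, ?_⟩
          have he : (f' a - f' b) - (k:ℝ) • ((a:E2) - (b:E2)) =
              -((f' b - f a) - (k:ℝ) • ((b:E2) - (a:E2))) := by
            rw [hf'2 a hane]
            simp only [smul_sub]
            abel
          rw [he, norm_neg]
          exact hnorm
      refine ⟨f', ?_, ?_, ?_, ?_⟩
      · rw [hf'2 root (by omega), hf1]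
      · intro v
        by_cases hv : G.dist root v = n + 1
        · exact goodset_subset ε Y G root v ((hf'1 v hv).1)
        · rw [hf'2 v hv]; exact hf2 v
      · intro v hv
        by_cases hveq : G.dist root v = n + 1
        · exact (hf'1 v hveq).1
        · rw [hf'2 v hveq]
          exact hf3 v (by omega)
      · intro a b hab ha hb
        rcases tree_level_step hG (r := root) hab with h | h
        · exact key a b hab h hb
        · obtain ⟨k, hk, hn⟩ := key b a hab.symm h ha
          refine ⟨k, hk, ?_⟩
          have he : (f' a - f' b) - (k:ℝ) • ((a:E2) - (b:E2)) =
              -((f' b - f' a) - (k:ℝ) • ((b:E2) - (a:E2))) := by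
            simp only [smul_sub]; abel
          rw [he, norm_neg]
          exact hn
  -- final assembly
  obtain ⟨C, hC0, hCb⟩ := density (L+1) root (by omega)
  set Xset : Set E2 := {y₀ ∈ Y | ¬ ∃ f : V → E2, (∀ a : V, f a ∈ Y) ∧
      f ⟨x₀, hx₀⟩ = y₀ ∧
      ∀ a b : V, G.Adj a b → ∃ k : ℕ, 1 ≤ k ∧
        ‖(f a - f b) - (k : ℝ) • ((a : E2) - (b : E2))‖ < ε} with hXset
  have hXsub : Xset ⊆ Y \ goodset ε Y G root root := by
    intro y hy
    refine ⟨hy.1, fun hgood => ?_⟩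
    obtain ⟨f, hf1, hf2, hf3, hf4⟩ := build y hgood L
    exact hy.2 ⟨f, hf2, hf1, fun a b hab => hf4 a b hab (hsupL a) (hsupL b)⟩
  have hXbound : ∀ T : ℝ, 0 ≤ T → ((Xset ∩ Metric.ball 0 T).ncard : ℝ) ≤ C * (T+1) := by
    intro T hT
    have hfin2 : ((Y \ goodset ε Y G root root) ∩ Metric.ball (0:E2) T).Finite :=
      (hfin T).subset (fun y hy => ⟨hy.1.1, hy.2⟩)
    have h1 : (Xset ∩ Metric.ball 0 T).ncard ≤
        ((Y \ goodset ε Y G root root) ∩ Metric.ball 0 T).ncard :=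
      Set.ncard_le_ncard (fun y hy => ⟨hXsub hy.1, hy.2⟩) hfin2
    calc ((Xset ∩ Metric.ball 0 T).ncard : ℝ) ≤ _ := by exact_mod_cast h1
      _ ≤ C * (T+1) := hCb T hT
  -- limit
  have hupper : Tendsto (fun r : ℝ => (2*C) * (r /
      ((Y ∩ Metric.ball (0:E2) r).ncard : ℝ))) atTop (nhds 0) := by
    have := hgrow.const_mul (2*C)
    simpa using this
  apply tendsto_of_tendsto_of_tendsto_of_le_of_le' tendsto_const_nhds hupper
  · filter_upwards [eventually_ge_atTop (1:ℝ)] with r hr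
    positivity
  · filter_upwards [eventually_ge_atTop (1:ℝ)] with r hr
    set den : ℝ := ((Y ∩ Metric.ball (0:E2) r).ncard : ℝ) with hden
    rcases eq_or_lt_of_le (show (0:ℝ) ≤ den from Nat.cast_nonneg _) with hd | hd
    · rw [← hd]
      simp
    · have hnum : ((Xset ∩ Metric.ball 0 r).ncard : ℝ) ≤ 2*C*r := by
        have := hXbound r (by linarith)
        nlinarith
      have h2 : ((Xset ∩ Metric.ball 0 r).ncard : ℝ)/den ≤ (2*C*r)/den := by gcongr
      have h3 : (2*C*r)/den = (2*C) * (r/den) := by ring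
      rw [h3] at h2
      exact h2
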